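/- (Left-distributivity of the Dehornoy bracket.) For all p, q, r ∈ B∞, p[q[r]] = (p[q])[p[r]], where p[q] = p·s(q)·σ_1·s(p)^{-1}. -/

import Mathlib

/-- Relators of the infinite braid group `B∞`: commutation `σ_i σ_j = σ_j σ_i` for
`|i - j| > 1` and the braid relation `σ_i σ_j σ_i = σ_j σ_i σ_j` for `|i - j| = 1`. -/
def braidRels : Set (FreeGroup ℕ+) :=
  {r | (∃ i j : ℕ+, (i : ℕ) + 1 < (j : ℕ) ∧
        r = FreeGroup.of i * FreeGroup.of j * (FreeGroup.of i)⁻¹ * (FreeGroup.of j)⁻¹) ∨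
       (∃ i : ℕ+,
        r = FreeGroup.of i * FreeGroup.of (i + 1) * FreeGroup.of i *
            (FreeGroup.of (i + 1))⁻¹ * (FreeGroup.of i)⁻¹ * (FreeGroup.of (i + 1))⁻¹)}

/-- The infinite braid group `B∞`. -/
abbrev Binf : Type := PresentedGroup braidRels

/-- The generator `σ_i` (`i ≥ 1`) of the infinite braid group. -/
def braidGen (i : ℕ+) : Binf := PresentedGroup.of i

/-- The Dehornoy bracket `p[q] = p · s(q) · σ_1 · s(p)⁻¹`, relative to the shift
endomorphism `s`. -/
def bracket (s : Binf →* Binf) (p q : Binf) : Binf :=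
  p * s q * braidGen 1 * (s p)⁻¹

lemma braidRels_eq_one {w : FreeGroup ℕ+} (hw : w ∈ braidRels) :
    PresentedGroup.mk braidRels w = 1 := by
  exact (QuotientGroup.eq_one_iff _).mpr (Subgroup.subset_normalClosure hw)

lemma braid_comm {i j : ℕ+} (h : (i : ℕ) + 1 < (j : ℕ)) :
    braidGen i * braidGen j = braidGen j * braidGen i := by
  have h1 : PresentedGroup.mk braidRels (FreeGroup.of i * FreeGroup.of j *
      (FreeGroup.of i)⁻¹ * (FreeGroup.of j)⁻¹) = 1 :=
    braidRels_eq_one (Or.inl ⟨i, j, h, rfl⟩)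
  simp only [map_mul, map_inv] at h1
  have : braidGen i * braidGen j * (braidGen i)⁻¹ * (braidGen j)⁻¹ = 1 := h1
  rw [mul_inv_eq_one, mul_inv_eq_iff_eq_mul] at this
  rw [this]

lemma braid_braid (i : ℕ+) :
    braidGen i * braidGen (i + 1) * braidGen i
      = braidGen (i + 1) * braidGen i * braidGen (i + 1) := by
  have h1 : PresentedGroup.mk braidRels (FreeGroup.of i * FreeGroup.of (i + 1) * FreeGroup.of i *
      (FreeGroup.of (i + 1))⁻¹ * (FreeGroup.of i)⁻¹ * (FreeGroup.of (i + 1))⁻¹) = 1 :=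
    braidRels_eq_one (Or.inr ⟨i, rfl⟩)
  simp only [map_mul, map_inv] at h1
  have h2 : braidGen i * braidGen (i + 1) * braidGen i *
      (braidGen (i + 1) * braidGen i * braidGen (i + 1))⁻¹ = 1 := by
    rw [mul_inv_rev, mul_inv_rev]
    simp only [mul_assoc]
    exact h1
  exact mul_inv_eq_one.mp h2

lemma key_lemma {G : Type*} [Group G] (σ A P Q R x y : G)
    (hP : σ * P = P * σ) (hQ : σ * Q = Q * σ) (hR : σ * R = R * σ)
    (hbr : σ * A * σ = A * σ * A) :
    x * σ * R * A * P⁻¹ * σ * P * A⁻¹ * Q⁻¹ * y = x * R * A * Q⁻¹ * σ * y := by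
  have h1 : P⁻¹ * (σ * P) = σ := by rw [hP]; group
  have h2 : σ * Q⁻¹ = Q⁻¹ * σ := by
    rw [eq_comm, inv_mul_eq_iff_eq_mul, ← mul_assoc, ← hQ]; group
  calc x * σ * R * A * P⁻¹ * σ * P * A⁻¹ * Q⁻¹ * y
      = x * ((σ * R) * (A * ((P⁻¹ * (σ * P)) * (A⁻¹ * (Q⁻¹ * y))))) := by group
    _ = x * ((R * σ) * (A * (σ * (A⁻¹ * (Q⁻¹ * y))))) := by rw [h1, hR]
    _ = x * R * ((σ * A * σ) * (A⁻¹ * (Q⁻¹ * y))) := by group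
    _ = x * R * ((A * σ * A) * (A⁻¹ * (Q⁻¹ * y))) := by rw [hbr]
    _ = x * R * A * ((σ * Q⁻¹) * y) := by group
    _ = x * R * A * ((Q⁻¹ * σ) * y) := by rw [h2]
    _ = x * R * A * Q⁻¹ * σ * y := by group

/-- Left-distributivity of the Dehornoy bracket:
`p[q[r]] = (p[q])[p[r]]`. -/
theorem bracket_left_distributive
    (s : Binf →* Binf) (hs : ∀ i : ℕ+, s (braidGen i) = braidGen (i + 1))
    (p q r : Binf) :
    bracket s p (bracket s q r) = bracket s (bracket s p q) (bracket s p r) := by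
  -- σ₁ commutes with s (s x) for every x
  have hcomm : ∀ x : Binf, braidGen 1 * s (s x) = s (s x) * braidGen 1 := by
    intro x
    have hx : x ∈ (Subgroup.centralizer {braidGen 1}).comap (s.comp s) := by
      apply PresentedGroup.generated_by
      intro j
      simp only [Subgroup.mem_comap, MonoidHom.comp_apply]
      rw [show (PresentedGroup.of j : Binf) = braidGen j from rfl, hs, hs]
      intro y hy
      rcases hy with rfl
      refine braid_comm (i := 1) (j := j + 1 + 1) ?_
      have : 0 < (j : ℕ) := j.pos
      simp only [PNat.add_coe, PNat.one_coe]
      omega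
    have := hx
    simp only [Subgroup.mem_comap, MonoidHom.comp_apply] at this
    exact this (braidGen 1) rfl
  have hbr : braidGen 1 * s (braidGen 1) * braidGen 1
      = s (braidGen 1) * braidGen 1 * s (braidGen 1) := by
    rw [hs]; exact braid_braid 1
  have hk := key_lemma (braidGen 1) (s (braidGen 1)) (s (s p)) (s (s q)) (s (s r))
    (p * s q) ((s p)⁻¹) (hcomm p) (hcomm q) (hcomm r) hbr
  calc bracket s p (bracket s q r)
      = p * s q * s (s r) * s (braidGen 1) * (s (s q))⁻¹ * braidGen 1 * (s p)⁻¹ := by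
        simp only [bracket, map_mul, map_inv]; group
    _ = p * s q * braidGen 1 * s (s r) * s (braidGen 1) * (s (s p))⁻¹ * braidGen 1 *
          s (s p) * (s (braidGen 1))⁻¹ * (s (s q))⁻¹ * (s p)⁻¹ := hk.symm
    _ = bracket s (bracket s p q) (bracket s p r) := by
        simp only [bracket, map_mul, map_inv]; group
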